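/- Let E be a real inner product space, let X ⊆ E be a nonempty convex set, let α > 0 and L > 0 with α ≤ 1/L. For each i = 1, …, K let s_i : E → ℝ be a convex differentiable function whose gradient ∇s_i satisfies s_i(v) ≤ s_i(u) + ⟪∇s_i(u), v - u⟫ + (L/2)‖v - u‖² for all u, v ∈ E, let g_i : E → ℝ be convex, and set f_i := s_i + g_i. Suppose there is a single point x* ∈ X that minimizes every f_i over X (i.e., the optimizer is constant in time). Let x_0 ∈ X and, for each i, let x_i ∈ X minimize z ↦ g_i(z) + (1/(2α))‖z - (x_{i-1} - α∇s_i(x_{i-1}))‖² over X. Then ∑_{i=1}^K [f_i(x_i) - f_i(x*)] ≤ (1/(2α))‖x_0 - x*‖², and consequently (1/K)∑_{i=1}^K [f_i(x_i) - f_i(x*)] → 0 as K → ∞. -/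

import Mathlib

open scoped RealInnerProductSpace

-- strong convexity identity for ‖·-y‖²
lemma sq_norm_combo {E : Type*} [NormedAddCommGroup E] [InnerProductSpace ℝ E]
    (p q : E) (t : ℝ) :
    ‖(1-t)•p + t•q‖^2 = (1-t)*‖p‖^2 + t*‖q‖^2 - t*(1-t)*‖p-q‖^2 := by
  simp only [← real_inner_self_eq_norm_sq]
  simp only [inner_add_add_self, inner_sub_sub_self, real_inner_smul_left,
    real_inner_smul_right]
  ring

-- gradient inequality for convex functions
lemma convex_grad_ineq {E : Type*} [NormedAddCommGroup E] [InnerProductSpace ℝ E]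
    {s : E → ℝ} {d u : E} (hconv : ConvexOn ℝ Set.univ s)
    (hdiff : HasFDerivAt s (innerSL ℝ d) u) (v : E) :
    s u + ⟪d, v - u⟫ ≤ s v := by
  have hφ : HasDerivAt (fun t : ℝ => s (u + t • (v - u))) ⟪d, v - u⟫ 0 := by
    have h1 : HasDerivAt (fun t : ℝ => u + t • (v - u)) (v - u) 0 := by
      simpa using ((hasDerivAt_id (0:ℝ)).smul_const (v - u)).const_add u
    have h2 : HasFDerivAt s (innerSL ℝ d) (u + (0:ℝ) • (v - u)) := by simpa using hdiff
    have := h2.comp_hasDerivAt 0 h1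
    simpa [Function.comp_def] using this
  have hslope : Filter.Tendsto (slope (fun t : ℝ => s (u + t • (v - u))) 0)
      (nhdsWithin 0 (Set.Ioi 0)) (nhds ⟪d, v - u⟫) :=
    (hasDerivAt_iff_tendsto_slope.mp hφ).mono_left
      (nhdsWithin_mono _ (fun t ht => ne_of_gt ht))
  have hub : ∀ᶠ t in nhdsWithin (0:ℝ) (Set.Ioi 0),
      slope (fun t : ℝ => s (u + t • (v - u))) 0 t ≤ s v - s u := by
    filter_upwards [Ioo_mem_nhdsGT_of_mem (by norm_num : (0:ℝ) ∈ Set.Ico 0 1)]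
      with t ht
    have h01 : (0:ℝ) ≤ 1 - t := by linarith [ht.2]
    have hcv := hconv.2 (Set.mem_univ u) (Set.mem_univ v) h01 (le_of_lt ht.1)
      (by ring : (1 - t) + t = 1)
    have heq : u + t • (v - u) = (1-t) • u + t • v := by
      simp [smul_sub, sub_smul]; abel
    have : s (u + t • (v - u)) ≤ (1-t) * s u + t * s v := by rw [heq]; exact hcv
    rw [slope_def_field]
    simp only [zero_smul, add_zero, sub_zero]
    rw [div_le_iff₀ ht.1]
    nlinarith [ht.1]
  have := le_of_tendsto hslope hub
  linarith

-- strong convexity of the prox objective at its constrained minimizer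
lemma prox_min_strong {E : Type*} [NormedAddCommGroup E] [InnerProductSpace ℝ E]
    {X : Set E} (hXconv : Convex ℝ X) {g : E → ℝ} (hg : ConvexOn ℝ Set.univ g)
    {c : ℝ} (hc : 0 ≤ c) (y xi z : E)
    (hmin : IsMinOn (fun w => g w + c * ‖w - y‖^2) X xi)
    (hxi : xi ∈ X) (hz : z ∈ X) :
    g xi + c * ‖xi - y‖^2 + c * ‖z - xi‖^2 ≤ g z + c * ‖z - y‖^2 := by
  set D : ℝ := c * ‖z - xi‖^2 with hD
  have hD0 : 0 ≤ D := mul_nonneg hc (sq_nonneg _)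
  have key : ∀ t : ℝ, t ∈ Set.Ioo (0:ℝ) 1 →
      g xi + c * ‖xi - y‖^2 + D ≤ g z + c * ‖z - y‖^2 + t * D := by
    intro t ht
    have h01 : (0:ℝ) ≤ 1 - t := by linarith [ht.2]
    have hzt : (1-t) • xi + t • z ∈ X := hXconv hxi hz h01 (le_of_lt ht.1) (by ring)
    have hmin' := hmin hzt
    have hgcv := hg.2 (Set.mem_univ xi) (Set.mem_univ z) h01 (le_of_lt ht.1) (by ring)
    have hid : ‖((1-t) • xi + t • z) - y‖^2
        = (1-t)*‖xi-y‖^2 + t*‖z-y‖^2 - t*(1-t)*‖xi-z‖^2 := by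
      have : ((1-t) • xi + t • z) - y = (1-t) • (xi - y) + t • (z - y) := by
        simp [smul_sub, sub_smul]; abel
      rw [this, sq_norm_combo]
      congr 3
      · abel_nf
    have hnz : ‖z - xi‖^2 = ‖xi - z‖^2 := by rw [← norm_neg]; congr 1; abel
    simp only [Set.mem_setOf_eq, smul_eq_mul] at hmin' hgcv
    have H : g xi + c * ‖xi - y‖^2 ≤
        (1-t) * g xi + t * g z + c * ((1-t)*‖xi-y‖^2 + t*‖z-y‖^2 - t*(1-t)*‖xi-z‖^2) := by
      calc g xi + c * ‖xi - y‖^2 ≤ g ((1-t) • xi + t • z) + c * ‖((1-t) • xi + t • z) - y‖^2 := hmin'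
        _ ≤ _ := by rw [hid]; linarith
    rw [hD, hnz]
    have ht' := ht.1
    nlinarith [mul_nonneg hc (sq_nonneg ‖xi - z‖)]
  by_cases hD' : D = 0
  · have := key (1/2) (by norm_num)
    rw [hD'] at this ⊢; linarith
  · have hDpos : 0 < D := lt_of_le_of_ne hD0 (Ne.symm hD')
    have : g xi + c * ‖xi - y‖^2 + D ≤ g z + c * ‖z - y‖^2 := by
      refine le_of_forall_pos_le_add (fun ε hε => ?_)
      set t : ℝ := min (1/2) (ε / D / 2) with htdef
      have htpos : 0 < t := lt_min (by norm_num) (by positivity)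
      have ht1 : t < 1 := lt_of_le_of_lt (min_le_left _ _) (by norm_num)
      have := key t ⟨htpos, ht1⟩
      have htD : t * D ≤ ε := by
        have h1 : t ≤ ε / D / 2 := min_le_right _ _
        have : t * D ≤ (ε / D / 2) * D := by nlinarith
        calc t * D ≤ ε / D / 2 * D := this
          _ = ε / 2 := by field_simp
          _ ≤ ε := by linarith
      linarith
    linarith [this]

lemma step_lemma {E : Type*} [NormedAddCommGroup E] [InnerProductSpace ℝ E]
    {X : Set E} (hXconv : Convex ℝ X)
    {α L : ℝ} (hα : 0 < α) (hL : 0 < L) (hαL : α ≤ 1 / L)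
    {s : E → ℝ} {d : E → E}
    (hs_conv : ConvexOn ℝ Set.univ s)
    (hs_diff : ∀ u : E, HasFDerivAt s (innerSL ℝ (d u)) u)
    (hdesc : ∀ u v : E, s v ≤ s u + ⟪d u, v - u⟫ + L / 2 * ‖v - u‖ ^ 2)
    {g : E → ℝ} (hg : ConvexOn ℝ Set.univ g)
    {u xi z : E} (hu : u ∈ X) (hxi : xi ∈ X) (hz : z ∈ X)
    (hmin : IsMinOn (fun w => g w + 1 / (2 * α) * ‖w - (u - α • d u)‖ ^ 2) X xi) :
    (s xi + g xi) - (s z + g z) ≤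
      1 / (2 * α) * ‖u - z‖ ^ 2 - 1 / (2 * α) * ‖xi - z‖ ^ 2 := by
  set c : ℝ := 1 / (2 * α) with hc
  have hc0 : 0 ≤ c := by positivity
  set y : E := u - α • d u with hy
  -- strong convexity at the minimizer
  have hA := prox_min_strong hXconv hg hc0 y xi z hmin hxi hz
  -- descent lemma with L/2 ≤ c
  have hLc : L / 2 ≤ c := by
    have hαL' : α * L ≤ 1 := (le_div_iff₀ hL).mp hαL
    rw [hc, div_le_div_iff₀ (by norm_num : (0:ℝ) < 2) (by positivity)]
    nlinarith
  have hB : s xi ≤ s u + ⟪d u, xi - u⟫ + c * ‖xi - u‖ ^ 2 := by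
    have := hdesc u xi
    nlinarith [sq_nonneg ‖xi - u‖]
  -- convexity of s
  have hC : s u + ⟪d u, z - u⟫ ≤ s z := convex_grad_ineq hs_conv (hs_diff u) z
  -- algebraic expansion of the norms involving y
  have hexp : ∀ w : E, ‖w - y‖^2 = ‖w - u‖^2 + 2*α*⟪d u, w - u⟫ + α^2*‖d u‖^2 := by
    intro w
    have : w - y = (w - u) + α • d u := by rw [hy]; abel
    rw [this]
    rw [← real_inner_self_eq_norm_sq, ← real_inner_self_eq_norm_sq,
      ← real_inner_self_eq_norm_sq]
    simp only [inner_add_add_self, real_inner_smul_left, real_inner_smul_right,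
      real_inner_comm (α • d u) (w - u)]
    ring
  have hez := hexp z
  have hexi := hexp xi
  have hinner : ⟪d u, z - u⟫ = ⟪d u, z - xi⟫ + ⟪d u, xi - u⟫ := by
    rw [← inner_add_right]; congr 1; abel
  have hcα : c * (2*α) = 1 := by rw [hc]; field_simp
  -- combine
  have hnz : ‖z - xi‖^2 = ‖xi - z‖^2 := by rw [← norm_neg]; congr 1; abel
  have hnu : ‖u - z‖^2 = ‖z - u‖^2 := by rw [← norm_neg]; congr 1; abel
  -- g xi ≤ g z + c(‖z-y‖² - ‖xi-y‖² - ‖z-xi‖²)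
  -- s xi ≤ s u + ⟪du, xi-u⟫ + c‖xi-u‖²
  -- s u ≤ s z - ⟪du, z-u⟫
  nlinarith [hA, hB, hC, hez, hexi]

/-- Remark after Theorem 1: if a single point `x*` minimizes every `f_i = s_i + g_i`
over `X` (the optimizer is constant in time), then the regret of the online
proximal-gradient method is bounded by `(1/(2α))‖x_0 - x*‖²`, and consequently the
time-averaged regret tends to `0` as `K → ∞`. -/
theorem no_regret_constant_optimizer
    {E : Type*} [NormedAddCommGroup E] [InnerProductSpace ℝ E]
    (X : Set E) (hXne : X.Nonempty) (hXconv : Convex ℝ X)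
    (α L : ℝ) (hα : 0 < α) (hL : 0 < L) (hαL : α ≤ 1 / L)
    (s : ℕ → E → ℝ) (ds : ℕ → E → E)
    (hs_conv : ∀ i, 1 ≤ i → ConvexOn ℝ Set.univ (s i))
    (hs_diff : ∀ i, 1 ≤ i → ∀ u : E, HasFDerivAt (s i) (innerSL ℝ (ds i u)) u)
    (hdesc : ∀ i, 1 ≤ i → ∀ u v : E,
      s i v ≤ s i u + ⟪ds i u, v - u⟫ + L / 2 * ‖v - u‖ ^ 2)
    (g : ℕ → E → ℝ) (hg_conv : ∀ i, 1 ≤ i → ConvexOn ℝ Set.univ (g i))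
    (f : ℕ → E → ℝ) (hf : ∀ i, f i = fun z => s i z + g i z)
    (xstar : E) (hxstar_mem : xstar ∈ X)
    (hxstar_min : ∀ i, 1 ≤ i → IsMinOn (f i) X xstar)
    (x : ℕ → E) (hx0 : x 0 ∈ X)
    (hx_mem : ∀ i, 1 ≤ i → x i ∈ X)
    (hx_min : ∀ i, 1 ≤ i →
      IsMinOn (fun z => g i z + 1 / (2 * α) * ‖z - (x (i - 1) - α • ds i (x (i - 1)))‖ ^ 2)
        X (x i)) :
    (∀ K : ℕ, ∑ i ∈ Finset.Icc 1 K, (f i (x i) - f i xstar) ≤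
      1 / (2 * α) * ‖x 0 - xstar‖ ^ 2) ∧
    Filter.Tendsto
      (fun K : ℕ => (1 : ℝ) / K * ∑ i ∈ Finset.Icc 1 K, (f i (x i) - f i xstar))
      Filter.atTop (nhds 0) := by
  set c : ℝ := 1 / (2 * α) with hc
  have hc0 : 0 ≤ c := by positivity
  have hmemX : ∀ i : ℕ, x i ∈ X := by
    intro i
    rcases Nat.eq_zero_or_pos i with h | h
    · rw [h]; exact hx0
    · exact hx_mem i h
  have hstep : ∀ i : ℕ, 1 ≤ i →
      f i (x i) - f i xstar ≤ c * ‖x (i-1) - xstar‖^2 - c * ‖x i - xstar‖^2 := by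
    intro i hi
    have := step_lemma hXconv hα hL hαL (hs_conv i hi) (hs_diff i hi)
      (hdesc i hi) (hg_conv i hi) (hmemX (i-1)) (hmemX i) hxstar_mem (hx_min i hi)
    rw [hf i]
    exact this
  have hsum : ∀ K : ℕ, ∑ i ∈ Finset.Icc 1 K, (f i (x i) - f i xstar) ≤
      c * ‖x 0 - xstar‖^2 - c * ‖x K - xstar‖^2 := by
    intro K
    have h1 : ∑ i ∈ Finset.Icc 1 K, (f i (x i) - f i xstar) ≤
        ∑ i ∈ Finset.Icc 1 K, (c * ‖x (i-1) - xstar‖^2 - c * ‖x i - xstar‖^2) := by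
      apply Finset.sum_le_sum
      intro i hi
      exact hstep i (Finset.mem_Icc.mp hi).1
    have h2 : ∀ N : ℕ, ∑ i ∈ Finset.Icc 1 N, (c * ‖x (i-1) - xstar‖^2 - c * ‖x i - xstar‖^2)
        = c * ‖x 0 - xstar‖^2 - c * ‖x N - xstar‖^2 := by
      intro N
      induction N with
      | zero => simp
      | succ n ih =>
        rw [Finset.sum_Icc_succ_top (by omega : 1 ≤ n + 1), ih]
        simp only [Nat.add_sub_cancel]
        ring
    linarith [h1, h2 K]
  have hbound : ∀ K : ℕ, ∑ i ∈ Finset.Icc 1 K, (f i (x i) - f i xstar) ≤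
      c * ‖x 0 - xstar‖^2 := by
    intro K
    have := hsum K
    nlinarith [mul_nonneg hc0 (sq_nonneg ‖x K - xstar‖)]
  refine ⟨hbound, ?_⟩
  have hterm : ∀ i : ℕ, 1 ≤ i → 0 ≤ f i (x i) - f i xstar := by
    intro i hi
    have := hxstar_min i hi (hmemX i)
    simp only [Set.mem_setOf_eq] at this
    linarith
  have hSnn : ∀ K : ℕ, 0 ≤ ∑ i ∈ Finset.Icc 1 K, (f i (x i) - f i xstar) := by
    intro K
    exact Finset.sum_nonneg fun i hi => hterm i (Finset.mem_Icc.mp hi).1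
  set C : ℝ := c * ‖x 0 - xstar‖^2 with hC
  have hC0 : 0 ≤ C := mul_nonneg hc0 (sq_nonneg _)
  apply squeeze_zero (g := fun K : ℕ => C / K)
  · intro K
    exact mul_nonneg (by positivity) (hSnn K)
  · intro K
    rcases Nat.eq_zero_or_pos K with h | h
    · simp [h]
    · have hKpos : (0:ℝ) < K := by exact_mod_cast h
      rw [div_eq_mul_inv, one_mul, div_eq_mul_inv, mul_comm C]
      exact mul_le_mul_of_nonneg_left (hbound K) (by positivity)
  · exact tendsto_const_div_atTop_nhds_zero_nat C
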